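/- Let m > 0 and define, for ρ > 0 and (ρ, ζ) with r = √(ρ² + ζ²) and r² ≠ mρ, the complex function f(ρ, ζ) = (ρ² + ζ² + m(iζ − r))/(ρ² + ζ² + m(iζ + r)). Then f satisfies the stationary axisymmetric Ernst equation: (Re f)·(∂²f/∂ρ² + ∂²f/∂ζ² + (1/ρ)∂f/∂ρ) = (∂f/∂ρ)² + (∂f/∂ζ)². -/

import Mathlib

set_option maxHeartbeats 1000000 in
private theorem key (m ρ ζ r i : ℂ) (hi : i^2 = -1) (hr : r^2 = ρ^2 + ζ^2)
    (hρ : ρ ≠ 0) (hr0 : r ≠ 0)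
    (hD : ρ^2 + ζ^2 + m*(i*ζ + r) ≠ 0)
    (hE : (ρ^2 + ζ^2 + m*r)^2 + m^2*ζ^2 ≠ 0) :
    (((ρ^2+ζ^2)^2 - m^2*ρ^2) / ((ρ^2+ζ^2+m*r)^2 + m^2*ζ^2)) * (2*m*((ρ^2+ζ^2 - i*m*ζ + 2*ρ^2)*(ρ^2+ζ^2)*(ρ^2+ζ^2+m*(i*ζ+r)) - ρ^2*(ρ^2+ζ^2 - i*m*ζ)*((ρ^2+ζ^2+m*(i*ζ+r)) + 4*(ρ^2+ζ^2) + 2*m*r)) / (r^3*(ρ^2+ζ^2+m*(i*ζ+r))^3) + 2*m*((ρ^2+3*ζ^2)*(ρ^2+ζ^2)*(ρ^2+ζ^2+m*(i*ζ+r)) - (ζ*(ρ^2+ζ^2) + i*m*ρ^2)*(ζ*(ρ^2+ζ^2+m*(i*ζ+r)) + 4*ζ*(ρ^2+ζ^2) + 2*m*ζ*r + 2*m*i*(ρ^2+ζ^2))) / (r^3*(ρ^2+ζ^2+m*(i*ζ+r))^3) + (2*m*ρ*(ρ^2+ζ^2 - i*m*ζ) / (r*(ρ^2+ζ^2+m*(i*ζ+r))^2))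 / ρ)
    = (2*m*ρ*(ρ^2+ζ^2 - i*m*ζ) / (r*(ρ^2+ζ^2+m*(i*ζ+r))^2))^2 + (2*m*(ζ*(ρ^2+ζ^2) + i*m*ρ^2) / (r*(ρ^2+ζ^2+m*(i*ζ+r))^2))^2 := by
  have hpoly : ((ρ^2+ζ^2)^2 - m^2*ρ^2) *
      (((ρ^2+ζ^2 - i*m*ζ + 2*ρ^2)*(ρ^2+ζ^2)*(ρ^2+ζ^2+m*(i*ζ+r)) - ρ^2*(ρ^2+ζ^2 - i*m*ζ)*((ρ^2+ζ^2+m*(i*ζ+r)) + 4*(ρ^2+ζ^2) + 2*m*r))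
      + ((ρ^2+3*ζ^2)*(ρ^2+ζ^2)*(ρ^2+ζ^2+m*(i*ζ+r)) - (ζ*(ρ^2+ζ^2) + i*m*ρ^2)*(ζ*(ρ^2+ζ^2+m*(i*ζ+r)) + 4*ζ*(ρ^2+ζ^2) + 2*m*ζ*r + 2*m*i*(ρ^2+ζ^2)))
      + (ρ^2+ζ^2)*(ρ^2+ζ^2+m*(i*ζ+r))*(ρ^2+ζ^2 - i*m*ζ)) * (ρ^2+ζ^2+m*(i*ζ+r))
      = 2*m*(ρ^2*(ρ^2+ζ^2 - i*m*ζ)^2 + (ζ*(ρ^2+ζ^2) + i*m*ρ^2)^2) * ((ρ^2+ζ^2+m*r)^2 + m^2*ζ^2) * r := by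
    linear_combination ((-2 : ℂ)*m^2*ζ^8 + (-8 : ℂ)*m^2*ρ^2*ζ^6 + (-12 : ℂ)*m^2*ρ^4*ζ^4 + (-8 : ℂ)*m^2*ρ^6*ζ^2 + (-2 : ℂ)*m^2*ρ^8 + (-2 : ℂ)*m^3*ζ^6*r + (-2 : ℂ)*m^3*ζ^7*i + (-6 : ℂ)*m^3*ρ^2*ζ^4*r + (-6 : ℂ)*m^3*ρ^2*ζ^5*i + (-6 : ℂ)*m^3*ρ^4*ζ^2*r + (-6 : ℂ)*m^3*ρ^4*ζ^3*i + (-2 : ℂ)*m^3*ρ^6*r + (-2 : ℂ)*m^3*ρ^6*ζ*i + (-2 : ℂ)*m^4*ρ^2*ζ^4 + (-4 : ℂ)*m^4*ρ^2*ζ^4*i^2 + (-4 : ℂ)*m^4*ρ^4*ζ^2 + (-8 : ℂ)*m^4*ρ^4*ζ^2*i^2 + (-2 : ℂ)*m^4*ρ^6 + (-4 : ℂ)*m^4*ρ^6*i^2 + (-2 : ℂ)*m^5*ρ^2*ζ^2*r*i^2 + 2*m^5*ρ^2*ζ^3*i + (-2 : ℂ)*m^5*ρ^4*r*i^2 + 2*m^5*ρ^4*ζ*i)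 * hr + ((-2 : ℂ)*m^2*ζ^10 + (-10 : ℂ)*m^2*ρ^2*ζ^8 + (-20 : ℂ)*m^2*ρ^4*ζ^6 + (-20 : ℂ)*m^2*ρ^6*ζ^4 + (-10 : ℂ)*m^2*ρ^8*ζ^2 + (-2 : ℂ)*m^2*ρ^10 + (-4 : ℂ)*m^3*ζ^8*r + (-2 : ℂ)*m^3*ζ^9*i + (-16 : ℂ)*m^3*ρ^2*ζ^6*r + (-8 : ℂ)*m^3*ρ^2*ζ^7*i + (-24 : ℂ)*m^3*ρ^4*ζ^4*r + (-12 : ℂ)*m^3*ρ^4*ζ^5*i + (-16 : ℂ)*m^3*ρ^6*ζ^2*r + (-8 : ℂ)*m^3*ρ^6*ζ^3*i + (-4 : ℂ)*m^3*ρ^8*r + (-2 : ℂ)*m^3*ρ^8*ζ*i + (-2 : ℂ)*m^4*ρ^2*ζ^6 + (-6 : ℂ)*m^4*ρ^4*ζ^4 + (-6 : ℂ)*m^4*ρ^6*ζ^2 + (-2 : ℂ)*m^4*ρ^8 + 2*m^5*ρ^2*ζ^5*i + 4*m^5*ρ^4*ζ^3*i + 2*m^5*ρ^6*ζ*i) *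 hi
  have hpoly' : ((ρ^2+ζ^2)^2 - m^2*ρ^2) *
      (((ρ^2+ζ^2 - i*m*ζ + 2*ρ^2)*(ρ^2+ζ^2)*(ρ^2+ζ^2+m*(i*ζ+r)) - ρ^2*(ρ^2+ζ^2 - i*m*ζ)*((ρ^2+ζ^2+m*(i*ζ+r)) + 4*(ρ^2+ζ^2) + 2*m*r))
      + ((ρ^2+3*ζ^2)*(ρ^2+ζ^2)*(ρ^2+ζ^2+m*(i*ζ+r)) - (ζ*(ρ^2+ζ^2) + i*m*ρ^2)*(ζ*(ρ^2+ζ^2+m*(i*ζ+r)) + 4*ζ*(ρ^2+ζ^2) + 2*m*ζ*r + 2*m*i*(ρ^2+ζ^2)))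
      + r^2*(ρ^2+ζ^2+m*(i*ζ+r))*(ρ^2+ζ^2 - i*m*ζ)) * (ρ^2+ζ^2+m*(i*ζ+r))
      = 2*m*(ρ^2*(ρ^2+ζ^2 - i*m*ζ)^2 + (ζ*(ρ^2+ζ^2) + i*m*ρ^2)^2) * ((ρ^2+ζ^2+m*r)^2 + m^2*ζ^2) * r := by
    linear_combination hpoly + ((ρ^2+ζ^2)^2 - m^2*ρ^2)*(ρ^2+ζ^2+m*(i*ζ+r))^2*(ρ^2+ζ^2 - i*m*ζ) * hr
  calc _ = (((ρ^2+ζ^2)^2 - m^2*ρ^2) *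
      (((ρ^2+ζ^2 - i*m*ζ + 2*ρ^2)*(ρ^2+ζ^2)*(ρ^2+ζ^2+m*(i*ζ+r)) - ρ^2*(ρ^2+ζ^2 - i*m*ζ)*((ρ^2+ζ^2+m*(i*ζ+r)) + 4*(ρ^2+ζ^2) + 2*m*r))
      + ((ρ^2+3*ζ^2)*(ρ^2+ζ^2)*(ρ^2+ζ^2+m*(i*ζ+r)) - (ζ*(ρ^2+ζ^2) + i*m*ρ^2)*(ζ*(ρ^2+ζ^2+m*(i*ζ+r)) + 4*ζ*(ρ^2+ζ^2) + 2*m*ζ*r + 2*m*i*(ρ^2+ζ^2)))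
      + r^2*(ρ^2+ζ^2+m*(i*ζ+r))*(ρ^2+ζ^2 - i*m*ζ)) * (ρ^2+ζ^2+m*(i*ζ+r))) * (2*m)
        / (((ρ^2+ζ^2+m*r)^2 + m^2*ζ^2) * r^3 * (ρ^2+ζ^2+m*(i*ζ+r))^4) := by
        field_simp
    _ = (2*m*(ρ^2*(ρ^2+ζ^2 - i*m*ζ)^2 + (ζ*(ρ^2+ζ^2) + i*m*ρ^2)^2) * ((ρ^2+ζ^2+m*r)^2 + m^2*ζ^2) * r) * (2*m)
        / (((ρ^2+ζ^2+m*r)^2 + m^2*ζ^2) * r^3 * (ρ^2+ζ^2+m*(i*ζ+r))^4) := by rw [hpoly']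
    _ = _ := by
        field_simp


set_option maxHeartbeats 4000000 in
set_option maxRecDepth 100000 in
theorem stmt14 (m : ℝ) (hm : 0 < m) (f : ℝ → ℝ → ℂ)
    (hf : ∀ ρ ζ : ℝ, f ρ ζ =
      (((ρ^2 + ζ^2 : ℝ) : ℂ)
          + (m : ℂ)*(Complex.I*(ζ : ℂ) - (Real.sqrt (ρ^2 + ζ^2) : ℂ))) /
      (((ρ^2 + ζ^2 : ℝ) : ℂ)
          + (m : ℂ)*(Complex.I*(ζ : ℂ) + (Real.sqrt (ρ^2 + ζ^2) : ℂ)))) :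
    ∀ ρ ζ : ℝ, 0 < ρ → (Real.sqrt (ρ^2 + ζ^2))^2 ≠ m*ρ →
      (((f ρ ζ).re : ℂ)) *
        (deriv (fun x : ℝ => deriv (fun x' : ℝ => f x' ζ) x) ρ
          + deriv (fun y : ℝ => deriv (fun y' : ℝ => f ρ y') y) ζ
          + (deriv (fun x : ℝ => f x ζ) ρ) / (ρ : ℂ))
      = (deriv (fun x : ℝ => f x ζ) ρ)^2 + (deriv (fun y : ℝ => f ρ y) ζ)^2 := by
  intro ρ ζ hρ hne
  -- nonvanishing of the denominator
  have hD_ne : ∀ x y : ℝ, 0 < x^2 + y^2 →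
      (((x^2 + y^2 : ℝ) : ℂ) + (m : ℂ)*(Complex.I*(y : ℂ) + (Real.sqrt (x^2 + y^2) : ℂ))) ≠ 0 := by
    intro x y h0 hc
    have h1 := congrArg Complex.re hc
    simp [Complex.add_re, Complex.mul_re, ← Complex.ofReal_pow] at h1
    nlinarith [Real.sqrt_pos.mpr h0, hm]
  -- derivative of sqrt(t^2 + c) in t
  have hsqrt : ∀ (x c : ℝ), 0 < x^2 + c →
      HasDerivAt (fun t : ℝ => Real.sqrt (t^2 + c)) (x / Real.sqrt (x^2 + c)) x := by
    intro x c h0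
    have hu : HasDerivAt (fun t : ℝ => t^2 + c) (2*x) x := by
      simpa using (hasDerivAt_pow 2 x).add_const c
    have h := (Real.hasDerivAt_sqrt h0.ne').comp x hu
    refine h.congr_deriv (Eq.symm ?_)
    have hs0 : Real.sqrt (x^2 + c) ≠ 0 := (Real.sqrt_pos.mpr h0).ne'
    field_simp
  -- first derivative in the first argument
  have hder1 : ∀ x y : ℝ, 0 < x^2 + y^2 →
      HasDerivAt (fun t : ℝ =>
        (((t^2 + y^2 : ℝ) : ℂ) + (m : ℂ)*(Complex.I*(y : ℂ) - (Real.sqrt (t^2 + y^2) : ℂ))) /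
        (((t^2 + y^2 : ℝ) : ℂ) + (m : ℂ)*(Complex.I*(y : ℂ) + (Real.sqrt (t^2 + y^2) : ℂ))))
        (2*(m:ℂ)*(x:ℂ)*((x:ℂ)^2 + (y:ℂ)^2 - Complex.I*(m:ℂ)*(y:ℂ)) /
          ((Real.sqrt (x^2 + y^2) : ℂ) *
            ((x:ℂ)^2 + (y:ℂ)^2 + (m:ℂ)*(Complex.I*(y:ℂ) + (Real.sqrt (x^2 + y^2) : ℂ)))^2)) x := by
    intro x y h0
    have hu : HasDerivAt (fun t : ℝ => t^2 + y^2) (2*x) x := by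
      simpa using (hasDerivAt_pow 2 x).add_const (y^2)
    have hs := hsqrt x (y^2) h0
    have hN : HasDerivAt (fun t : ℝ =>
        ((t^2 + y^2 : ℝ) : ℂ) + (m : ℂ)*(Complex.I*(y : ℂ) - (Real.sqrt (t^2 + y^2) : ℂ)))
        (((2*x : ℝ) : ℂ) + (m : ℂ)*(0 - ((x / Real.sqrt (x^2 + y^2) : ℝ) : ℂ))) x :=
      hu.ofReal_comp.add
        (((hasDerivAt_const x (Complex.I*(y:ℂ))).sub hs.ofReal_comp).const_mul (m:ℂ))
    have hDen : HasDerivAt (fun t : ℝ =>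
        ((t^2 + y^2 : ℝ) : ℂ) + (m : ℂ)*(Complex.I*(y : ℂ) + (Real.sqrt (t^2 + y^2) : ℂ)))
        (((2*x : ℝ) : ℂ) + (m : ℂ)*(0 + ((x / Real.sqrt (x^2 + y^2) : ℝ) : ℂ))) x :=
      hu.ofReal_comp.add
        (((hasDerivAt_const x (Complex.I*(y:ℂ))).add hs.ofReal_comp).const_mul (m:ℂ))
    have h := hN.div hDen (hD_ne x y h0)
    refine h.congr_deriv (Eq.symm ?_)
    have hr2 : ((Real.sqrt (x^2 + y^2) : ℝ) : ℂ)^2 = (x:ℂ)^2 + (y:ℂ)^2 := by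
      rw [← Complex.ofReal_pow, Real.sq_sqrt h0.le]
      push_cast; ring
    have hs0 : ((Real.sqrt (x^2 + y^2) : ℝ) : ℂ) ≠ 0 := by
      simpa using (Real.sqrt_pos.mpr h0).ne'
    have hDc : ((x:ℂ)^2 + (y:ℂ)^2 + (m:ℂ)*(Complex.I*(y:ℂ) + (Real.sqrt (x^2 + y^2) : ℂ))) ≠ 0 := by
      have := hD_ne x y h0
      push_cast at this
      convert this using 2 <;> ring
    have hDc' := hD_ne x y h0
    push_cast
    rw [← sub_eq_zero]
    refine Eq.trans (b := ((-4 : ℂ)*(m:ℂ)*(x:ℂ)) * (((Real.sqrt (x^2 + y^2) : ℝ) : ℂ)^2 - ((x:ℂ)^2 + (y:ℂ)^2)) / (((Real.sqrt (x^2 + y^2) : ℝ) : ℂ)^1 * ((x:ℂ)^2 + (y:ℂ)^2 + (m:ℂ)*(Complex.I*(y:ℂ) + ((Real.sqrt (x^2 + y^2) : ℝ) : ℂ)))^2)) ?_ ?_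
    · field_simp
      ring
    · rw [hr2]; ring
  -- first derivative in the second argument
  have hder2 : ∀ y : ℝ,
      HasDerivAt (fun t : ℝ =>
        (((ρ^2 + t^2 : ℝ) : ℂ) + (m : ℂ)*(Complex.I*(t : ℂ) - (Real.sqrt (ρ^2 + t^2) : ℂ))) /
        (((ρ^2 + t^2 : ℝ) : ℂ) + (m : ℂ)*(Complex.I*(t : ℂ) + (Real.sqrt (ρ^2 + t^2) : ℂ))))
        (2*(m:ℂ)*((y:ℂ)*((ρ:ℂ)^2 + (y:ℂ)^2) + Complex.I*(m:ℂ)*(ρ:ℂ)^2) /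
          ((Real.sqrt (ρ^2 + y^2) : ℂ) *
            ((ρ:ℂ)^2 + (y:ℂ)^2 + (m:ℂ)*(Complex.I*(y:ℂ) + (Real.sqrt (ρ^2 + y^2) : ℂ)))^2)) y := by
    intro y
    have h0 : 0 < ρ^2 + y^2 := by positivity
    have h0' : 0 < y^2 + ρ^2 := by positivity
    have hu : HasDerivAt (fun t : ℝ => ρ^2 + t^2) (2*y) y := by
      simpa using (hasDerivAt_pow 2 y).const_add (ρ^2)
    have hs : HasDerivAt (fun t : ℝ => Real.sqrt (ρ^2 + t^2)) (y / Real.sqrt (ρ^2 + y^2)) y := by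
      have h := (Real.hasDerivAt_sqrt h0.ne').comp y hu
      refine h.congr_deriv (Eq.symm ?_)
      have hs0 : Real.sqrt (ρ^2 + y^2) ≠ 0 := (Real.sqrt_pos.mpr h0).ne'
      field_simp
    have hIt : HasDerivAt (fun t : ℝ => Complex.I*(t:ℂ)) Complex.I y := by
      simpa using ((hasDerivAt_id y).ofReal_comp).const_mul Complex.I
    have hN : HasDerivAt (fun t : ℝ =>
        ((ρ^2 + t^2 : ℝ) : ℂ) + (m : ℂ)*(Complex.I*(t : ℂ) - (Real.sqrt (ρ^2 + t^2) : ℂ)))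
        (((2*y : ℝ) : ℂ) + (m : ℂ)*(Complex.I - ((y / Real.sqrt (ρ^2 + y^2) : ℝ) : ℂ))) y :=
      hu.ofReal_comp.add ((hIt.sub hs.ofReal_comp).const_mul (m:ℂ))
    have hDen : HasDerivAt (fun t : ℝ =>
        ((ρ^2 + t^2 : ℝ) : ℂ) + (m : ℂ)*(Complex.I*(t : ℂ) + (Real.sqrt (ρ^2 + t^2) : ℂ)))
        (((2*y : ℝ) : ℂ) + (m : ℂ)*(Complex.I + ((y / Real.sqrt (ρ^2 + y^2) : ℝ) : ℂ))) y :=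
      hu.ofReal_comp.add ((hIt.add hs.ofReal_comp).const_mul (m:ℂ))
    have hDne : (((ρ^2 + y^2 : ℝ) : ℂ) + (m : ℂ)*(Complex.I*(y : ℂ) + (Real.sqrt (ρ^2 + y^2) : ℂ))) ≠ 0 := by
      have := hD_ne ρ y h0
      convert this using 2
    have h := hN.div hDen hDne
    refine h.congr_deriv (Eq.symm ?_)
    have hr2 : ((Real.sqrt (ρ^2 + y^2) : ℝ) : ℂ)^2 = (ρ:ℂ)^2 + (y:ℂ)^2 := by
      rw [← Complex.ofReal_pow, Real.sq_sqrt h0.le]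
      push_cast; ring
    have hs0 : ((Real.sqrt (ρ^2 + y^2) : ℝ) : ℂ) ≠ 0 := by
      simpa using (Real.sqrt_pos.mpr h0).ne'
    have hDc : ((ρ:ℂ)^2 + (y:ℂ)^2 + (m:ℂ)*(Complex.I*(y:ℂ) + (Real.sqrt (ρ^2 + y^2) : ℂ))) ≠ 0 := by
      have := hD_ne ρ y h0
      push_cast at this
      convert this using 2 <;> ring
    push_cast
    rw [← sub_eq_zero]
    refine Eq.trans (b := ((-4 : ℂ)*(m:ℂ)*(y:ℂ) + (-2 : ℂ)*(m:ℂ)^2*Complex.I) * (((Real.sqrt (ρ^2 + y^2) : ℝ) : ℂ)^2 - ((ρ:ℂ)^2 + (y:ℂ)^2)) / (((Real.sqrt (ρ^2 + y^2) : ℝ) : ℂ)^1 * ((ρ:ℂ)^2 + (y:ℂ)^2 + (m:ℂ)*(Complex.I*(y:ℂ) + ((Real.sqrt (ρ^2 + y^2) : ℝ) : ℂ)))^2)) ?_ ?_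
    · field_simp
      ring
    · rw [hr2]; ring
  -- basic facts at the point (ρ, ζ)
  have h0 : 0 < ρ^2 + ζ^2 := by positivity
  have hs0 : ((Real.sqrt (ρ^2 + ζ^2) : ℝ) : ℂ) ≠ 0 := by
    simpa using (Real.sqrt_pos.mpr h0).ne'
  have hr2 : ((Real.sqrt (ρ^2 + ζ^2) : ℝ) : ℂ)^2 = (ρ:ℂ)^2 + (ζ:ℂ)^2 := by
    rw [← Complex.ofReal_pow, Real.sq_sqrt h0.le]; push_cast; ring
  -- second derivative in the first argument
  have h2p : HasDerivAt (fun x : ℝ =>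
      2*(m:ℂ)*(x:ℂ)*((x:ℂ)^2 + (ζ:ℂ)^2 - Complex.I*(m:ℂ)*(ζ:ℂ)) /
        ((Real.sqrt (x^2 + ζ^2) : ℂ) *
          ((x:ℂ)^2 + (ζ:ℂ)^2 + (m:ℂ)*(Complex.I*(ζ:ℂ) + (Real.sqrt (x^2 + ζ^2) : ℂ)))^2))
      (2*(m:ℂ)*(((ρ:ℂ)^2 + (ζ:ℂ)^2 - Complex.I*(m:ℂ)*(ζ:ℂ) + 2*(ρ:ℂ)^2)*((ρ:ℂ)^2 + (ζ:ℂ)^2)*((ρ:ℂ)^2 + (ζ:ℂ)^2 + (m:ℂ)*(Complex.I*(ζ:ℂ) + (Real.sqrt (ρ^2 + ζ^2) : ℂ)))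
        - (ρ:ℂ)^2*((ρ:ℂ)^2 + (ζ:ℂ)^2 - Complex.I*(m:ℂ)*(ζ:ℂ))*(((ρ:ℂ)^2 + (ζ:ℂ)^2 + (m:ℂ)*(Complex.I*(ζ:ℂ) + (Real.sqrt (ρ^2 + ζ^2) : ℂ))) + 4*((ρ:ℂ)^2 + (ζ:ℂ)^2) + 2*(m:ℂ)*(Real.sqrt (ρ^2 + ζ^2) : ℂ))) /
        ((Real.sqrt (ρ^2 + ζ^2) : ℂ)^3 *
          ((ρ:ℂ)^2 + (ζ:ℂ)^2 + (m:ℂ)*(Complex.I*(ζ:ℂ) + (Real.sqrt (ρ^2 + ζ^2) : ℂ)))^3)) ρ := by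
    have hx : HasDerivAt (fun x : ℝ => ((x:ℝ):ℂ)) 1 ρ := (hasDerivAt_id ρ).ofReal_comp
    have hsC : HasDerivAt (fun x : ℝ => ((Real.sqrt (x^2 + ζ^2) : ℝ) : ℂ))
        ((ρ / Real.sqrt (ρ^2 + ζ^2) : ℝ) : ℂ) ρ := (hsqrt ρ (ζ^2) h0).ofReal_comp
    have hx2 : HasDerivAt (fun x : ℝ => ((x:ℝ):ℂ)^2) (2*(ρ:ℂ)) ρ := by
      simpa using (hasDerivAt_pow 2 ((ρ:ℝ):ℂ)).comp_ofReal
    have hA : HasDerivAt (fun x : ℝ => (x:ℂ)^2 + (ζ:ℂ)^2 - Complex.I*(m:ℂ)*(ζ:ℂ))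
        (2*(ρ:ℂ)) ρ := (hx2.add_const ((ζ:ℂ)^2)).sub_const (Complex.I*(m:ℂ)*(ζ:ℂ))
    have hNum := (hx.const_mul (2*(m:ℂ))).mul hA
    have hDv : HasDerivAt (fun x : ℝ =>
        (x:ℂ)^2 + (ζ:ℂ)^2 + (m:ℂ)*(Complex.I*(ζ:ℂ) + (Real.sqrt (x^2 + ζ^2) : ℂ)))
        (2*(ρ:ℂ) + (m:ℂ)*(0 + ((ρ / Real.sqrt (ρ^2 + ζ^2) : ℝ) : ℂ))) ρ :=
      (hx2.add_const ((ζ:ℂ)^2)).add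
        (((hasDerivAt_const ρ (Complex.I*(ζ:ℂ))).add hsC).const_mul (m:ℂ))
    have hDc : ((ρ:ℂ)^2 + (ζ:ℂ)^2 + (m:ℂ)*(Complex.I*(ζ:ℂ) + (Real.sqrt (ρ^2 + ζ^2) : ℂ))) ≠ 0 := by
      have := hD_ne ρ ζ h0
      push_cast at this
      convert this using 2 <;> ring
    have hDen' := hsC.mul (hDv.mul hDv)
    simp only [Pi.mul_def] at hDen'
    rw [show (fun x : ℝ => ((Real.sqrt (x^2 + ζ^2) : ℝ) : ℂ) *
        (((x:ℂ)^2 + (ζ:ℂ)^2 + (m:ℂ)*(Complex.I*(ζ:ℂ) + (Real.sqrt (x^2 + ζ^2) : ℂ))) *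
         ((x:ℂ)^2 + (ζ:ℂ)^2 + (m:ℂ)*(Complex.I*(ζ:ℂ) + (Real.sqrt (x^2 + ζ^2) : ℂ))))) =
        (fun x : ℝ => ((Real.sqrt (x^2 + ζ^2) : ℝ) : ℂ) *
        ((x:ℂ)^2 + (ζ:ℂ)^2 + (m:ℂ)*(Complex.I*(ζ:ℂ) + (Real.sqrt (x^2 + ζ^2) : ℂ)))^2)
      from funext fun t => by ring] at hDen'
    have hvne : ((Real.sqrt (ρ^2 + ζ^2) : ℂ) *
        ((ρ:ℂ)^2 + (ζ:ℂ)^2 + (m:ℂ)*(Complex.I*(ζ:ℂ) + (Real.sqrt (ρ^2 + ζ^2) : ℂ)))^2) ≠ 0 :=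
      mul_ne_zero hs0 (pow_ne_zero 2 hDc)
    have h := hNum.div hDen' hvne
    refine h.congr_deriv (Eq.symm ?_)
    have hrne : Real.sqrt (ρ^2 + ζ^2) ≠ 0 := (Real.sqrt_pos.mpr h0).ne'
    simp only [Pi.mul_apply]
    push_cast
    rw [← sub_eq_zero]
    refine Eq.trans (b := ((-2 : ℂ)*(m:ℂ)*(ζ:ℂ)^6 + (-2 : ℂ)*(m:ℂ)*(ρ:ℂ)^2*(ζ:ℂ)^4 + (2 : ℂ)*(m:ℂ)*(ρ:ℂ)^4*(ζ:ℂ)^2 + (2 : ℂ)*(m:ℂ)*(ρ:ℂ)^6 + (-4 : ℂ)*(m:ℂ)^2*(ζ:ℂ)^4*((Real.sqrt (ρ^2 + ζ^2) : ℝ) : ℂ) + (-2 : ℂ)*(m:ℂ)^2*(ζ:ℂ)^5*Complex.I + (-8 : ℂ)*(m:ℂ)^2*(ρ:ℂ)^2*(ζ:ℂ)^2*((Real.sqrt (ρ^2 + ζ^2) : ℝ) : ℂ) + (-12 : ℂ)*(m:ℂ)^2*(ρ:ℂ)^2*(ζ:ℂ)^3*Complex.I + (-4 : ℂ)*(m:ℂ)^2*(ρ:ℂ)^4*((Real.sqrt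 (ρ^2 + ζ^2) : ℝ) : ℂ) + (-10 : ℂ)*(m:ℂ)^2*(ρ:ℂ)^4*(ζ:ℂ)*Complex.I + (-2 : ℂ)*(m:ℂ)^3*(ζ:ℂ)^2*((Real.sqrt (ρ^2 + ζ^2) : ℝ) : ℂ)^2 + (2 : ℂ)*(m:ℂ)^3*(ζ:ℂ)^4*Complex.I^2 + (-6 : ℂ)*(m:ℂ)^3*(ρ:ℂ)^2*((Real.sqrt (ρ^2 + ζ^2) : ℝ) : ℂ)^2 + (-16 : ℂ)*(m:ℂ)^3*(ρ:ℂ)^2*(ζ:ℂ)*Complex.I*((Real.sqrt (ρ^2 + ζ^2) : ℝ) : ℂ) + (-10 : ℂ)*(m:ℂ)^3*(ρ:ℂ)^2*(ζ:ℂ)^2*Complex.I^2 + (2 : ℂ)*(m:ℂ)^4*(ζ:ℂ)*Complex.I*((Real.sqrt (ρ^2 + ζ^2) : ℝ) : ℂ)^2 + (4 : ℂ)*(m:ℂ)^4*(ζ:ℂ)^2*Complex.I^2*((Real.sqrt (ρ^2 + ζ^2) : ℝ) : ℂ) + (2 : ℂ)*(m:ℂ)^4*(ζ:ℂ)^3*Complex.I^3)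 * (((Real.sqrt (ρ^2 + ζ^2) : ℝ) : ℂ)^2 - ((ρ:ℂ)^2 + (ζ:ℂ)^2)) / (((Real.sqrt (ρ^2 + ζ^2) : ℝ) : ℂ)^3 * ((ρ:ℂ)^2 + (ζ:ℂ)^2 + (m:ℂ)*(Complex.I*(ζ:ℂ) + ((Real.sqrt (ρ^2 + ζ^2) : ℝ) : ℂ)))^4)) ?_ ?_
    · generalize hDg : ((ρ:ℂ)^2 + (ζ:ℂ)^2 + (m:ℂ)*(Complex.I*(ζ:ℂ) + ((Real.sqrt (ρ^2 + ζ^2) : ℝ) : ℂ))) = D at hDc ⊢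
      field_simp
      subst hDg
      ring
    · rw [hr2]; ring
  -- second derivative in the second argument
  have h2z : HasDerivAt (fun y : ℝ =>
      2*(m:ℂ)*((y:ℂ)*((ρ:ℂ)^2 + (y:ℂ)^2) + Complex.I*(m:ℂ)*(ρ:ℂ)^2) /
        ((Real.sqrt (ρ^2 + y^2) : ℂ) *
          ((ρ:ℂ)^2 + (y:ℂ)^2 + (m:ℂ)*(Complex.I*(y:ℂ) + (Real.sqrt (ρ^2 + y^2) : ℂ)))^2))
      (2*(m:ℂ)*(((ρ:ℂ)^2 + 3*(ζ:ℂ)^2)*((ρ:ℂ)^2 + (ζ:ℂ)^2)*((ρ:ℂ)^2 + (ζ:ℂ)^2 + (m:ℂ)*(Complex.I*(ζ:ℂ) + (Real.sqrt (ρ^2 + ζ^2) : ℂ)))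
        - ((ζ:ℂ)*((ρ:ℂ)^2 + (ζ:ℂ)^2) + Complex.I*(m:ℂ)*(ρ:ℂ)^2)*((ζ:ℂ)*((ρ:ℂ)^2 + (ζ:ℂ)^2 + (m:ℂ)*(Complex.I*(ζ:ℂ) + (Real.sqrt (ρ^2 + ζ^2) : ℂ))) + 4*(ζ:ℂ)*((ρ:ℂ)^2 + (ζ:ℂ)^2) + 2*(m:ℂ)*(ζ:ℂ)*(Real.sqrt (ρ^2 + ζ^2) : ℂ) + 2*(m:ℂ)*Complex.I*((ρ:ℂ)^2 + (ζ:ℂ)^2))) /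
        ((Real.sqrt (ρ^2 + ζ^2) : ℂ)^3 *
          ((ρ:ℂ)^2 + (ζ:ℂ)^2 + (m:ℂ)*(Complex.I*(ζ:ℂ) + (Real.sqrt (ρ^2 + ζ^2) : ℂ)))^3)) ζ := by
    have hy : HasDerivAt (fun y : ℝ => ((y:ℝ):ℂ)) 1 ζ := (hasDerivAt_id ζ).ofReal_comp
    have hsC : HasDerivAt (fun y : ℝ => ((Real.sqrt (ρ^2 + y^2) : ℝ) : ℂ))
        ((ζ / Real.sqrt (ρ^2 + ζ^2) : ℝ) : ℂ) ζ := by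
      have hu : HasDerivAt (fun t : ℝ => ρ^2 + t^2) (2*ζ) ζ := by
        simpa using (hasDerivAt_pow 2 ζ).const_add (ρ^2)
      have h := (Real.hasDerivAt_sqrt h0.ne').comp ζ hu
      refine HasDerivAt.ofReal_comp ?_
      refine h.congr_deriv (Eq.symm ?_)
      have hrne : Real.sqrt (ρ^2 + ζ^2) ≠ 0 := (Real.sqrt_pos.mpr h0).ne'
      field_simp
    have hy2 : HasDerivAt (fun y : ℝ => ((y:ℝ):ℂ)^2) (2*(ζ:ℂ)) ζ := by
      simpa using (hasDerivAt_pow 2 ((ζ:ℝ):ℂ)).comp_ofReal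
    have hB : HasDerivAt (fun y : ℝ => (y:ℂ)*((ρ:ℂ)^2 + (y:ℂ)^2) + Complex.I*(m:ℂ)*(ρ:ℂ)^2)
        (1*((ρ:ℂ)^2 + (ζ:ℂ)^2) + (ζ:ℂ)*(2*(ζ:ℂ))) ζ :=
      (hy.mul (hy2.const_add ((ρ:ℂ)^2))).add_const (Complex.I*(m:ℂ)*(ρ:ℂ)^2)
    have hNum := hB.const_mul (2*(m:ℂ))
    have hDv : HasDerivAt (fun y : ℝ =>
        (ρ:ℂ)^2 + (y:ℂ)^2 + (m:ℂ)*(Complex.I*(y:ℂ) + (Real.sqrt (ρ^2 + y^2) : ℂ)))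
        (2*(ζ:ℂ) + (m:ℂ)*(Complex.I*1 + ((ζ / Real.sqrt (ρ^2 + ζ^2) : ℝ) : ℂ))) ζ :=
      (hy2.const_add ((ρ:ℂ)^2)).add
        (((hy.const_mul Complex.I).add hsC).const_mul (m:ℂ))
    have hDc : ((ρ:ℂ)^2 + (ζ:ℂ)^2 + (m:ℂ)*(Complex.I*(ζ:ℂ) + (Real.sqrt (ρ^2 + ζ^2) : ℂ))) ≠ 0 := by
      have := hD_ne ρ ζ h0
      push_cast at this
      convert this using 2 <;> ring
    have hDen' := hsC.mul (hDv.mul hDv)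
    simp only [Pi.mul_def] at hDen'
    rw [show (fun y : ℝ => ((Real.sqrt (ρ^2 + y^2) : ℝ) : ℂ) *
        (((ρ:ℂ)^2 + (y:ℂ)^2 + (m:ℂ)*(Complex.I*(y:ℂ) + (Real.sqrt (ρ^2 + y^2) : ℂ))) *
         ((ρ:ℂ)^2 + (y:ℂ)^2 + (m:ℂ)*(Complex.I*(y:ℂ) + (Real.sqrt (ρ^2 + y^2) : ℂ))))) =
        (fun y : ℝ => ((Real.sqrt (ρ^2 + y^2) : ℝ) : ℂ) *
        ((ρ:ℂ)^2 + (y:ℂ)^2 + (m:ℂ)*(Complex.I*(y:ℂ) + (Real.sqrt (ρ^2 + y^2) : ℂ)))^2)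
      from funext fun t => by ring] at hDen'
    have hvne : ((Real.sqrt (ρ^2 + ζ^2) : ℂ) *
        ((ρ:ℂ)^2 + (ζ:ℂ)^2 + (m:ℂ)*(Complex.I*(ζ:ℂ) + (Real.sqrt (ρ^2 + ζ^2) : ℂ)))^2) ≠ 0 :=
      mul_ne_zero hs0 (pow_ne_zero 2 hDc)
    have h := hNum.div hDen' hvne
    refine h.congr_deriv (Eq.symm ?_)
    have hrne : Real.sqrt (ρ^2 + ζ^2) ≠ 0 := (Real.sqrt_pos.mpr h0).ne'
    push_cast
    rw [← sub_eq_zero]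
    refine Eq.trans (b := ((2 : ℂ)*(m:ℂ)*(ζ:ℂ)^6 + (2 : ℂ)*(m:ℂ)*(ρ:ℂ)^2*(ζ:ℂ)^4 + (-2 : ℂ)*(m:ℂ)*(ρ:ℂ)^4*(ζ:ℂ)^2 + (-2 : ℂ)*(m:ℂ)*(ρ:ℂ)^6 + (-4 : ℂ)*(m:ℂ)^2*(ζ:ℂ)^4*((Real.sqrt (ρ^2 + ζ^2) : ℝ) : ℂ) + (-8 : ℂ)*(m:ℂ)^2*(ρ:ℂ)^2*(ζ:ℂ)^2*((Real.sqrt (ρ^2 + ζ^2) : ℝ) : ℂ) + (8 : ℂ)*(m:ℂ)^2*(ρ:ℂ)^2*(ζ:ℂ)^3*Complex.I + (-4 : ℂ)*(m:ℂ)^2*(ρ:ℂ)^4*((Real.sqrt (ρ^2 + ζ^2) : ℝ) : ℂ) + (8 : ℂ)*(m:ℂ)^2*(ρ:ℂ)^4*(ζ:ℂ)*Complex.I + (-6 : ℂ)*(m:ℂ)^3*(ζ:ℂ)^2*((Real.sqrt (ρ^2 + ζ^2) : ℝ) : ℂ)^2 + (-8 : ℂ)*(m:ℂ)^3*(ζ:ℂ)^3*Complex.I*((Real.sqrt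 (ρ^2 + ζ^2) : ℝ) : ℂ) + (-2 : ℂ)*(m:ℂ)^3*(ζ:ℂ)^4*Complex.I^2 + (-2 : ℂ)*(m:ℂ)^3*(ρ:ℂ)^2*((Real.sqrt (ρ^2 + ζ^2) : ℝ) : ℂ)^2 + (8 : ℂ)*(m:ℂ)^3*(ρ:ℂ)^2*(ζ:ℂ)*Complex.I*((Real.sqrt (ρ^2 + ζ^2) : ℝ) : ℂ) + (14 : ℂ)*(m:ℂ)^3*(ρ:ℂ)^2*(ζ:ℂ)^2*Complex.I^2 + (4 : ℂ)*(m:ℂ)^3*(ρ:ℂ)^4*Complex.I^2 + (4 : ℂ)*(m:ℂ)^4*(ρ:ℂ)^2*Complex.I^2*((Real.sqrt (ρ^2 + ζ^2) : ℝ) : ℂ) + (4 : ℂ)*(m:ℂ)^4*(ρ:ℂ)^2*(ζ:ℂ)*Complex.I^3) * (((Real.sqrt (ρ^2 + ζ^2) : ℝ) : ℂ)^2 - ((ρ:ℂ)^2 + (ζ:ℂ)^2)) / (((Real.sqrt (ρ^2 + ζ^2) : ℝ) : ℂ)^3 * ((ρ:ℂ)^2 + (ζ:ℂ)^2 + (m:ℂ)*(Complex.I*(ζ:ℂ)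 + ((Real.sqrt (ρ^2 + ζ^2) : ℝ) : ℂ)))^4)) ?_ ?_
    · generalize hDg : ((ρ:ℂ)^2 + (ζ:ℂ)^2 + (m:ℂ)*(Complex.I*(ζ:ℂ) + ((Real.sqrt (ρ^2 + ζ^2) : ℝ) : ℂ))) = D at hDc ⊢
      field_simp
      subst hDg
      ring
    · rw [hr2]; ring
  -- remaining simple facts
  have hρC : (ρ:ℂ) ≠ 0 := by exact_mod_cast hρ.ne'
  have hDc : ((ρ:ℂ)^2 + (ζ:ℂ)^2 + (m:ℂ)*(Complex.I*(ζ:ℂ) + (Real.sqrt (ρ^2 + ζ^2) : ℂ))) ≠ 0 := by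
    have := hD_ne ρ ζ h0
    push_cast at this
    convert this using 2 <;> ring
  have h1 : 0 < ρ^2 + ζ^2 + m*Real.sqrt (ρ^2 + ζ^2) := by
    nlinarith [mul_nonneg hm.le (Real.sqrt_nonneg (ρ^2 + ζ^2)), h0]
  have hEr : (0:ℝ) < (ρ^2 + ζ^2 + m*Real.sqrt (ρ^2 + ζ^2))^2 + m^2*ζ^2 := by
    nlinarith [pow_pos h1 2, sq_nonneg (m*ζ)]
  have hEc : (((ρ:ℂ)^2 + (ζ:ℂ)^2 + (m:ℂ)*((Real.sqrt (ρ^2 + ζ^2) : ℝ) : ℂ))^2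
      + (m:ℂ)^2*(ζ:ℂ)^2) ≠ 0 := by
    have hcast : (((ρ:ℂ)^2 + (ζ:ℂ)^2 + (m:ℂ)*((Real.sqrt (ρ^2 + ζ^2) : ℝ) : ℂ))^2
        + (m:ℂ)^2*(ζ:ℂ)^2)
        = (((ρ^2 + ζ^2 + m*Real.sqrt (ρ^2 + ζ^2))^2 + m^2*ζ^2 : ℝ) : ℂ) := by
      push_cast; ring
    rw [hcast]
    exact_mod_cast hEr.ne'
  have hsr : Real.sqrt (ρ^2 + ζ^2) ^ 2 = ρ^2 + ζ^2 := Real.sq_sqrt h0.le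
  -- rewrite the goal
  simp only [hf]
  -- the real part
  have e5 : ((((((ρ^2 + ζ^2 : ℝ) : ℂ)
          + (m : ℂ)*(Complex.I*(ζ : ℂ) - (Real.sqrt (ρ^2 + ζ^2) : ℂ))) /
      (((ρ^2 + ζ^2 : ℝ) : ℂ)
          + (m : ℂ)*(Complex.I*(ζ : ℂ) + (Real.sqrt (ρ^2 + ζ^2) : ℂ)))).re : ℝ) : ℂ)
      = (((ρ:ℂ)^2 + (ζ:ℂ)^2)^2 - (m:ℂ)^2*(ρ:ℂ)^2) /
        (((ρ:ℂ)^2 + (ζ:ℂ)^2 + (m:ℂ)*((Real.sqrt (ρ^2 + ζ^2) : ℝ) : ℂ))^2 + (m:ℂ)^2*(ζ:ℂ)^2) := by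
    have hre : (((((ρ^2 + ζ^2 : ℝ) : ℂ)
          + (m : ℂ)*(Complex.I*(ζ : ℂ) - (Real.sqrt (ρ^2 + ζ^2) : ℂ))) /
      (((ρ^2 + ζ^2 : ℝ) : ℂ)
          + (m : ℂ)*(Complex.I*(ζ : ℂ) + (Real.sqrt (ρ^2 + ζ^2) : ℂ)))).re : ℝ)
        = ((ρ^2 + ζ^2)^2 - m^2*ρ^2) /
          ((ρ^2 + ζ^2 + m*Real.sqrt (ρ^2 + ζ^2))^2 + m^2*ζ^2) := by
      rw [Complex.div_re]
      simp only [Complex.add_re, Complex.add_im, Complex.mul_re, Complex.mul_im,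
        Complex.sub_re, Complex.sub_im, Complex.I_re, Complex.I_im,
        Complex.ofReal_re, Complex.ofReal_im, Complex.normSq_apply]
      rw [← add_div]
      rw [div_eq_div_iff (by nlinarith [hEr]) (by nlinarith [hEr])]
      linear_combination (-(m^2) * ((ρ^2 + ζ^2 + m*Real.sqrt (ρ^2 + ζ^2))^2 + m^2*ζ^2)) * hsr
    rw [hre]
    push_cast
    ring
  rw [e5]
  -- the first derivatives
  rw [(hder1 ρ ζ h0).deriv, (hder2 ζ).deriv]
  -- the second derivative in ζ
  rw [show (fun y : ℝ => deriv (fun y' : ℝ =>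
      (((ρ^2 + y'^2 : ℝ) : ℂ) + (m : ℂ)*(Complex.I*(y' : ℂ) - (Real.sqrt (ρ^2 + y'^2) : ℂ))) /
      (((ρ^2 + y'^2 : ℝ) : ℂ) + (m : ℂ)*(Complex.I*(y' : ℂ) + (Real.sqrt (ρ^2 + y'^2) : ℂ)))) y)
      = fun y : ℝ =>
      2*(m:ℂ)*((y:ℂ)*((ρ:ℂ)^2 + (y:ℂ)^2) + Complex.I*(m:ℂ)*(ρ:ℂ)^2) /
        ((Real.sqrt (ρ^2 + y^2) : ℂ) *
          ((ρ:ℂ)^2 + (y:ℂ)^2 + (m:ℂ)*(Complex.I*(y:ℂ) + (Real.sqrt (ρ^2 + y^2) : ℂ)))^2)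
    from funext fun y => (hder2 y).deriv]
  rw [h2z.deriv]
  -- the second derivative in ρ
  have e3 : deriv (fun x : ℝ => deriv (fun x' : ℝ =>
      (((x'^2 + ζ^2 : ℝ) : ℂ) + (m : ℂ)*(Complex.I*(ζ : ℂ) - (Real.sqrt (x'^2 + ζ^2) : ℂ))) /
      (((x'^2 + ζ^2 : ℝ) : ℂ) + (m : ℂ)*(Complex.I*(ζ : ℂ) + (Real.sqrt (x'^2 + ζ^2) : ℂ)))) x) ρ
      = deriv (fun x : ℝ =>
      2*(m:ℂ)*(x:ℂ)*((x:ℂ)^2 + (ζ:ℂ)^2 - Complex.I*(m:ℂ)*(ζ:ℂ)) /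
        ((Real.sqrt (x^2 + ζ^2) : ℂ) *
          ((x:ℂ)^2 + (ζ:ℂ)^2 + (m:ℂ)*(Complex.I*(ζ:ℂ) + (Real.sqrt (x^2 + ζ^2) : ℂ)))^2)) ρ := by
    apply Filter.EventuallyEq.deriv_eq
    filter_upwards [eventually_gt_nhds hρ] with x hx
    exact (hder1 x ζ (by nlinarith)).deriv
  rw [e3, h2p.deriv]
  exact key (m:ℂ) (ρ:ℂ) (ζ:ℂ) ((Real.sqrt (ρ^2 + ζ^2) : ℝ) : ℂ) Complex.I
    Complex.I_sq hr2 hρC hs0 hDc hEc
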